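/- The category of finite sets has enough subobjects: every presheaf P : FinSetᵒᵖ → Set that preserves all small products existing in FinSetᵒᵖ (equivalently, sends every small coproduct of finite sets that is again finite to the corresponding product of sets) and admits a monomorphism into a representable presheaf FinSet(−, X) is itself representable. -/

import Mathlib

open CategoryTheory CategoryTheory.Limits Opposite

universe u

namespace Aux13

noncomputable section

abbrev pt : FintypeCat.{u} := FintypeCat.of PUnit

def ptHom (A : FintypeCat.{u}) (a : A) : pt ⟶ A := FintypeCat.homMk (fun _ => a)

def theFan (A : FintypeCat.{u}) : Fan (fun _ : A => op pt.{u}) :=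
  Fan.mk (op A) (fun a => (ptHom A a).op)

def theFanIsLimit (A : FintypeCat.{u}) : IsLimit (theFan A) :=
  mkFanLimit _
    (fun s => (show A ⟶ s.pt.unop from FintypeCat.homMk (fun a => (s.proj a).unop PUnit.unit)).op)
    (fun s a => by
      apply Quiver.Hom.unop_inj
      refine FintypeCat.hom_ext _ _ fun u => ?_
      cases u
      rfl)
    (fun s m hm => by
      apply Quiver.Hom.unop_inj
      refine FintypeCat.hom_ext _ _ fun a => ?_
      have := congr_arg Quiver.Hom.unop (hm a)
      exact ConcreteCategory.congr_hom this PUnit.unit)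

end

end Aux13

open Aux13 in
/-- Statement 13: The category of finite sets has enough subobjects: every presheaf
`P : FinSetᵒᵖ ⥤ Set` that preserves all small products existing in `FinSetᵒᵖ` and admits
a monomorphism (a componentwise injective natural transformation) into a representable
presheaf `FinSet(-, X)` is itself representable. -/
theorem fintypeCat_hasEnoughSubobjects (P : FintypeCat.{u}ᵒᵖ ⥤ Type u)
    (hP : ∀ ι : Type u, PreservesLimitsOfShape (Discrete ι) P)
    (X : FintypeCat.{u}) (f : P ⟶ yoneda.obj X)
    (hf : ∀ A : FintypeCat.{u}ᵒᵖ, Function.Injective (f.app A)) :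
    P.IsRepresentable := by
  classical
  -- the evaluation map is bijective
  have epres : ∀ A : FintypeCat.{u}, Function.Bijective
      (fun (x : P.obj (op A)) (a : A) => P.map (ptHom A a).op x) := by
    intro A
    letI := hP A
    have hlim : IsLimit (P.mapCone (theFan A)) :=
      isLimitOfPreserves P (theFanIsLimit A)
    let e1 := Types.isLimitEquivSections hlim
    let e2 : (Discrete.functor (fun _ : A => op pt.{u}) ⋙ P).sections ≃ (A → P.obj (op pt)) :=
      { toFun := fun s a => s.1 ⟨a⟩
        invFun := fun g => ⟨fun j => g j.as, by
          intro j j' ff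
          have hjj : j = j' := Discrete.ext ff.1.1
          subst hjj
          have hff : ff = 𝟙 j := Subsingleton.elim _ _
          subst hff
          simp⟩
        left_inv := fun s => Subtype.ext (funext fun j => by rcases j with ⟨a⟩; rfl)
        right_inv := fun g => rfl }
    have : (fun (x : P.obj (op A)) (a : A) => P.map (ptHom A a).op x) = (e1.trans e2) := rfl
    rw [this]
    exact (e1.trans e2).bijective
  let q : P.obj (op pt.{u}) → X := fun y => ConcreteCategory.hom (X := pt) (Y := X) (f.app (op pt) y) PUnit.unit
  have hq : ∀ (A : FintypeCat.{u}) (x : P.obj (op A)) (a : A),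
      q (P.map (ptHom A a).op x) = ConcreteCategory.hom (X := A) (Y := X) (f.app (op A) x) a := by
    intro A x a
    exact ConcreteCategory.congr_hom (ConcreteCategory.congr_hom (f.naturality (ptHom A a).op) x) PUnit.unit
  letI : Fintype ↥(Set.range q) := Fintype.ofFinite _
  let S : FintypeCat.{u} := FintypeCat.of ↥(Set.range q)
  let φ : ∀ A : FintypeCat.{u}, P.obj (op A) → (A ⟶ S) :=
    fun A x => FintypeCat.homMk fun a => ⟨ConcreteCategory.hom (X := A) (Y := X) (f.app (op A) x) a, ⟨P.map (ptHom A a).op x, hq A x a⟩⟩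
  have φinj : ∀ A, Function.Injective (φ A) := by
    intro A x x' h
    apply hf (op A)
    refine FintypeCat.hom_ext _ _ fun a => ?_
    exact congr_arg Subtype.val (ConcreteCategory.congr_hom h a)
  have φsurj : ∀ A, Function.Surjective (φ A) := by
    intro A g
    choose y hy using fun a : A => (g a).2
    obtain ⟨x, hx⟩ := (epres A).2 y
    refine ⟨x, ?_⟩
    ext1 a
    apply Subtype.ext
    show ConcreteCategory.hom (X := A) (Y := X) (f.app (op A) x) a = (g a).1
    have hxa : P.map (ptHom A a).op x = y a := congr_fun hx a
    rw [← hq A x a, hxa, hy a]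
  have φnat : ∀ (A A' : FintypeCat.{u}) (h : A ⟶ A') (x : P.obj (op A')),
      φ A (P.map h.op x) = h ≫ φ A' x := by
    intro A A' h x
    ext1 a
    apply Subtype.ext
    show ConcreteCategory.hom (X := A) (Y := X) (f.app (op A) (P.map h.op x)) a = ConcreteCategory.hom (X := A') (Y := X) (f.app (op A') x) (h a)
    have := ConcreteCategory.congr_hom (f.naturality h.op) x
    exact ConcreteCategory.congr_hom this a
  exact Functor.RepresentableBy.isRepresentable
    { homEquiv := fun {A} => (Equiv.ofBijective (φ A) ⟨φinj A, φsurj A⟩).symm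
      homEquiv_comp := fun {A A'} h g => by
        rw [Equiv.symm_apply_eq]
        show h ≫ g = φ A (P.map h.op _)
        rw [φnat]
        congr 1
        exact ((Equiv.ofBijective (φ A') ⟨φinj A', φsurj A'⟩).apply_symm_apply g).symm }
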